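/- arXiv:1708.06255 — 3 statements merged into one kernel-verified Lean document; each statement's English description precedes it below -/
import Mathlib

section
/- Let $u = (u^0, u^1, u^2, u^3) \in \mathbb{R}^4$ satisfy $-(u^0)^2 + (u^1)^2 + (u^2)^2 + (u^3)^2 = -1$ with $u^0 > 0$, and let $a_2 \geq 3$. Then for every nonzero $\underline{\xi} = (\xi_1, \xi_2, \xi_3) \in \mathbb{R}^3$, the quadratic equation in $\xi_0$ given by $(a_2 - 1)(u^0 \xi_0 + u^1 \xi_1 + u^2 \xi_2 + u^3 \xi_3)^2 - (-\xi_0^2 + \xi_1^2 + \xi_2^2 + \xi_3^2) = 0$ has two distinct real roots. -/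
/-- Hyperbolicity of the characteristic polynomial
`p̃₂(ξ) = (a₂ - 1) (uᵘ ξᵤ)² - ξᵘ ξᵤ` in the direction ξ₀: for a normalized
timelike four-vector `u` (Minkowski signature (-,+,+,+)) and `a₂ ≥ 3`, for each
nonzero spatial covector `(ξ₁,ξ₂,ξ₃)` the quadratic equation in `ξ₀` has two
distinct real roots. -/
theorem stmt0_hyperbolicity_p2
    (u0 u1 u2 u3 a2 : ℝ)
    (hu : -(u0 ^ 2) + u1 ^ 2 + u2 ^ 2 + u3 ^ 2 = -1)
    (hu0 : 0 < u0) (ha2 : 3 ≤ a2)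
    (ξ1 ξ2 ξ3 : ℝ) (hξ : ¬(ξ1 = 0 ∧ ξ2 = 0 ∧ ξ3 = 0)) :
    ∃ x y : ℝ, x ≠ y ∧
      ((a2 - 1) * (u0 * x + u1 * ξ1 + u2 * ξ2 + u3 * ξ3) ^ 2
        - (-(x ^ 2) + ξ1 ^ 2 + ξ2 ^ 2 + ξ3 ^ 2) = 0) ∧
      ((a2 - 1) * (u0 * y + u1 * ξ1 + u2 * ξ2 + u3 * ξ3) ^ 2
        - (-(y ^ 2) + ξ1 ^ 2 + ξ2 ^ 2 + ξ3 ^ 2) = 0) := by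
  set b := u1 * ξ1 + u2 * ξ2 + u3 * ξ3 with hb
  set s := ξ1 ^ 2 + ξ2 ^ 2 + ξ3 ^ 2 with hs
  have hspos : 0 < s := by
    rcases not_and_or.mp hξ with h1 | h23
    · positivity
    rcases not_and_or.mp h23 with h2 | h3
    · positivity
    · positivity
  set A := (a2 - 1) * u0 ^ 2 + 1 with hA
  set B := 2 * (a2 - 1) * u0 * b with hB
  set C := (a2 - 1) * b ^ 2 - s with hC
  have hApos : 0 < A := by nlinarith [sq_nonneg u0]
  have hcs : b ^ 2 ≤ (u1 ^ 2 + u2 ^ 2 + u3 ^ 2) * s := by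
    rw [hb, hs]
    nlinarith [sq_nonneg (u1 * ξ2 - u2 * ξ1), sq_nonneg (u1 * ξ3 - u3 * ξ1),
      sq_nonneg (u2 * ξ3 - u3 * ξ2)]
  have h123 : u1 ^ 2 + u2 ^ 2 + u3 ^ 2 = u0 ^ 2 - 1 := by linarith
  have hcs2 : b ^ 2 ≤ (u0 ^ 2 - 1) * s := by rw [h123] at hcs; exact hcs
  have ha1 : (0:ℝ) ≤ a2 - 1 := by linarith
  have hDpos : 0 < discrim A B C := by
    rw [discrim, hA, hB, hC]
    nlinarith [mul_le_mul_of_nonneg_left hcs2 ha1, mul_nonneg ha1 hspos.le]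
  set D := Real.sqrt (discrim A B C) with hD
  have hDp : 0 < D := Real.sqrt_pos.mpr hDpos
  have hDsq : discrim A B C = D * D := (Real.mul_self_sqrt hDpos.le).symm
  refine ⟨(-B + D) / (2 * A), (-B - D) / (2 * A), ?_, ?_, ?_⟩
  · intro h
    have : D = -D := by
      field_simp at h
      linarith
    linarith
  · have hx := (quadratic_eq_zero_iff hApos.ne' hDsq ((-B + D) / (2 * A))).mpr (Or.inl rfl)
    rw [hA, hB, hC, hb, hs] at hx
    linear_combination hx
  · have hx := (quadratic_eq_zero_iff hApos.ne' hDsq ((-B - D) / (2 * A))).mpr (Or.inr rfl)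
    rw [hA, hB, hC, hb, hs] at hx
    linear_combination hx
end

section
/- Let $T: (0,\infty) \to (0,\infty)$ be twice differentiable and set $w(\tau) = \tau T(\tau)$, $f(\tau) = 1 + \tau T'(\tau)/T(\tau)$. If $T$ satisfies the second-order Bjorken equation $\tau\bar{\chi}\frac{T''}{T} + 2\tau\bar{\chi}\left(\frac{T'}{T}\right)^2 + \frac{7}{3}\bar{\chi}\frac{T'}{T} + \frac{\bar{\chi}}{9\tau} + \tau T' - \frac{4\bar{\eta}}{9\tau} + \frac{T}{3} = 0$, and $f$ can be written as a function of $w$ (i.e., $dw/d\tau \neq 0$ along the solution), then $f(w)$ satisfies the first-order equation $\bar{\chi} w f f' + 3\bar{\chi} f^2 + f(w - \frac{14}{3}\bar{\chi}) + \frac{16\bar{\chi}}{9} - \frac{4\bar{\eta}}{9} - \frac{2w}{3} = 0$. -/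
/-- Change of variables for Bjorken flow: if `T(τ) > 0` satisfies the
second-order Bjorken equation and `f = 1 + τ T'/T` can be written as a
function `F` of `w = τ T(τ)` (with `dw/dτ ≠ 0`), then `F` satisfies the
first-order equation
`χ̄ w F F' + 3χ̄ F² + F (w - (14/3)χ̄) + 16χ̄/9 - 4η̄/9 - 2w/3 = 0`. -/
theorem stmt11_bjorken_change_of_variables
    (ηb χb : ℝ)
    (T : ℝ → ℝ) (F : ℝ → ℝ)
    (hTpos : ∀ τ : ℝ, 0 < τ → 0 < T τ)
    (hTdiff : ∀ τ : ℝ, 0 < τ → DifferentiableAt ℝ T τ)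
    (hT'diff : ∀ τ : ℝ, 0 < τ → DifferentiableAt ℝ (deriv T) τ)
    (hFdiff : ∀ τ : ℝ, 0 < τ → DifferentiableAt ℝ F (τ * T τ))
    -- the second-order Bjorken equation for the temperature:
    (hT2 : ∀ τ : ℝ, 0 < τ →
      τ * χb * (deriv (deriv T) τ) / T τ
        + 2 * τ * χb * (deriv T τ / T τ) ^ 2
        + 7 / 3 * χb * (deriv T τ / T τ)
        + χb / (9 * τ)
        + τ * deriv T τ
        - 4 / 9 * ηb / τ
        + T τ / 3 = 0)
    -- `f` is a function of `w`:
    (hF : ∀ τ : ℝ, 0 < τ → F (τ * T τ) = 1 + τ * deriv T τ / T τ)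
    -- `dw/dτ ≠ 0` along the solution:
    (hwne : ∀ τ : ℝ, 0 < τ → deriv (fun s => s * T s) τ ≠ 0) :
    ∀ τ : ℝ, 0 < τ →
      χb * (τ * T τ) * F (τ * T τ) * deriv F (τ * T τ)
        + 3 * χb * F (τ * T τ) ^ 2
        + F (τ * T τ) * (τ * T τ - 14 / 3 * χb)
        + 16 * χb / 9 - 4 * ηb / 9 - 2 * (τ * T τ) / 3 = 0 := by
  intro τ hτ
  have hT := hTpos τ hτ
  have hTne : T τ ≠ 0 := ne_of_gt hT
  have hτne : τ ≠ 0 := ne_of_gt hτ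
  have hw : HasDerivAt (fun s => s * T s) (T τ + τ * deriv T τ) τ := by
    have h := (hasDerivAt_id τ).mul (hTdiff τ hτ).hasDerivAt
    exact h.congr_deriv (by simp)
  have hne2 : T τ + τ * deriv T τ ≠ 0 := by
    have h := hwne τ hτ
    rwa [hw.deriv] at h
  have hh : HasDerivAt (fun s => 1 + s * deriv T s / T s)
      (((1 * deriv T τ + τ * deriv (deriv T) τ) * T τ - (τ * deriv T τ) * deriv T τ) / (T τ)^2) τ := by
    have hA : HasDerivAt (fun s => s * deriv T s) (1 * deriv T τ + τ * deriv (deriv T) τ) τ :=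
      (hasDerivAt_id τ).mul (hT'diff τ hτ).hasDerivAt
    exact (hA.div (hTdiff τ hτ).hasDerivAt hTne).const_add 1
  have heq : (fun s => F (s * T s)) =ᶠ[nhds τ] (fun s => 1 + s * deriv T s / T s) := by
    filter_upwards [eventually_gt_nhds hτ] with s hs using hF s hs
  have hcomp : HasDerivAt (fun s => F (s * T s)) (deriv F (τ * T τ) * (T τ + τ * deriv T τ)) τ :=
    (hFdiff τ hτ).hasDerivAt.comp τ hw
  have hderiv_eq : deriv F (τ * T τ) * (T τ + τ * deriv T τ)
      = ((1 * deriv T τ + τ * deriv (deriv T) τ) * T τ - (τ * deriv T τ) * deriv T τ) / (T τ)^2 := by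
    rw [← hcomp.deriv, heq.deriv_eq, hh.deriv]
  have hD : deriv F (τ * T τ)
      = (((1 * deriv T τ + τ * deriv (deriv T) τ) * T τ - (τ * deriv T τ) * deriv T τ) / (T τ)^2)
        / (T τ + τ * deriv T τ) := (eq_div_iff hne2).mpr hderiv_eq
  have h2 := hT2 τ hτ
  have h2' : 9*τ^2*χb*(deriv (deriv T) τ)*(T τ) + 18*τ^2*χb*(deriv T τ)^2
      + 21*χb*τ*(deriv T τ)*(T τ) + χb*(T τ)^2 + 9*τ^2*(deriv T τ)*(T τ)^2
      - 4*ηb*(T τ)^2 + 3*τ*(T τ)^3 = 0 := by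
    field_simp at h2
    have hfac : (81 * τ * (T τ)^2) * (9*τ^2*χb*(deriv (deriv T) τ)*(T τ) + 18*τ^2*χb*(deriv T τ)^2
        + 21*χb*τ*(deriv T τ)*(T τ) + χb*(T τ)^2 + 9*τ^2*(deriv T τ)*(T τ)^2
        - 4*ηb*(T τ)^2 + 3*τ*(T τ)^3) = 0 := by linear_combination (27 * τ * (T τ)^2) * h2
    have hne81 : (81 * τ * (T τ)^2) ≠ 0 := by positivity
    exact (mul_eq_zero.mp hfac).resolve_left hne81
  rw [hF τ hτ, hD]
  field_simp
  linear_combination 3 * h2'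
end

section
/- The Navier-Stokes Gubser temperature profile $\hat{T}_{NS}(\rho) = \frac{T_0}{\cosh^{2/3}\rho} + \frac{4\bar{\eta}}{27}\frac{\sinh^3\rho}{\cosh^{2/3}\rho}\, {}_2F_1\left(\frac{3}{2},\frac{7}{6};\frac{5}{2};-\sinh^2\rho\right)$ satisfies $\lim_{\rho \to +\infty}\hat{T}_{NS}(\rho) = \frac{2\bar{\eta}}{3}$ and $\lim_{\rho \to -\infty}\hat{T}_{NS}(\rho) = -\frac{2\bar{\eta}}{3}$. In particular, for any $\bar{\eta} > 0$ and any $T_0$, there exists $\rho$ with $\hat{T}_{NS}(\rho) < 0$. -/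
open Filter

/-- Gauss hypergeometric function `₂F₁(a, b; c; x)` defined by its Euler
integral representation (valid for `c > b > 0` and `x < 1`):
`₂F₁(a,b;c;x) = Γ(c)/(Γ(b)Γ(c-b)) ∫₀¹ t^{b-1} (1-t)^{c-b-1} (1-xt)^{-a} dt`. -/
noncomputable def hyp2F1 (a b c x : ℝ) : ℝ :=
  (Real.Gamma c / (Real.Gamma b * Real.Gamma (c - b))) *
    ∫ t in (0 : ℝ)..1, t ^ (b - 1) * (1 - t) ^ (c - b - 1) * (1 - x * t) ^ (-a)

namespace GubserAux

open MeasureTheory Set Real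

/-- limit integrand -/
noncomputable def g0 : ℝ → ℝ := fun u => u ^ ((1:ℝ)/6) * (1+u) ^ (-(3:ℝ)/2)

/-- truncated integrand -/
noncomputable def hfun (s : ℝ) : ℝ → ℝ :=
  fun u => u ^ ((1:ℝ)/6) * (1 - u/s^2) ^ ((1:ℝ)/3) * (1+u) ^ (-(3:ℝ)/2)

noncomputable def Phi (s : ℝ) : ℝ := ∫ u in Set.Ioc (0:ℝ) (s^2), hfun s u

noncomputable def J : ℝ := ∫ u in Set.Ioi (0:ℝ), g0 u

lemma g0_meas : Measurable g0 :=
  (measurable_id.pow measurable_const).mul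
    ((measurable_const.add measurable_id).pow measurable_const)

lemma hfun_meas (s : ℝ) : Measurable (hfun s) :=
  ((measurable_id.pow measurable_const).mul
    ((measurable_const.sub (measurable_id.div_const _)).pow measurable_const)).mul
    ((measurable_const.add measurable_id).pow measurable_const)

lemma g0_integrable : IntegrableOn g0 (Set.Ioi (0:ℝ)) := by
  rw [← Set.Ioc_union_Ioi_eq_Ioi (zero_le_one)]
  apply IntegrableOn.union
  · apply IntegrableOn.mono_set _ Set.Ioc_subset_Icc_self
    apply ContinuousOn.integrableOn_Icc
    apply ContinuousOn.mul
    · exact (Real.continuous_rpow_const (by norm_num)).continuousOn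
    · intro x hx
      exact (ContinuousAt.rpow_const (by fun_prop)
        (Or.inl (by nlinarith [hx.1]))).continuousWithinAt
  · apply Integrable.mono' (integrableOn_Ioi_rpow_of_lt (show (-(4:ℝ)/3) < -1 by norm_num) one_pos)
    · exact (g0_meas.aestronglyMeasurable).restrict
    · filter_upwards [ae_restrict_mem measurableSet_Ioi] with u hu
      have hu1 : (1:ℝ) < u := hu
      have hu0 : (0:ℝ) < u := by linarith
      have h1 : g0 u ≤ u ^ ((1:ℝ)/6) * u ^ (-(3:ℝ)/2) := by
        apply mul_le_mul_of_nonneg_left _ (Real.rpow_nonneg hu0.le _)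
        exact Real.rpow_le_rpow_of_nonpos hu0 (by linarith) (by norm_num)
      rw [Real.norm_eq_abs, abs_of_nonneg (by unfold g0; positivity)]
      calc g0 u ≤ u ^ ((1:ℝ)/6) * u ^ (-(3:ℝ)/2) := h1
        _ = u ^ (-(4:ℝ)/3) := by rw [← Real.rpow_add hu0]; norm_num

lemma J_as_beta : J = ∫ v in Set.Ioo (0:ℝ) 1, v ^ ((1:ℝ)/6) * (1-v) ^ (-(2:ℝ)/3) := by
  have himg : (fun v : ℝ => v / (1-v)) '' Set.Ioo 0 1 = Set.Ioi 0 := by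
    ext u
    constructor
    · rintro ⟨v, ⟨h0, h1⟩, rfl⟩
      exact div_pos h0 (by linarith)
    · intro hu
      have hu0 : (0:ℝ) < u := hu
      refine ⟨u / (1+u), ⟨div_pos hu0 (by linarith), (div_lt_one (by linarith)).mpr (by linarith)⟩, ?_⟩
      show u/(1+u) / (1 - u/(1+u)) = u
      rw [show (1:ℝ) - u/(1+u) = 1/(1+u) by field_simp; ring]
      field_simp
  have hderiv : ∀ v ∈ Set.Ioo (0:ℝ) 1, HasDerivWithinAt (fun v : ℝ => v / (1-v))
      (((1-v)^2)⁻¹) (Set.Ioo 0 1) v := by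
    intro v hv
    have hne : (1:ℝ) - v ≠ 0 := by intro h; have := hv.2; linarith
    have h3 : HasDerivAt (fun v : ℝ => v / (1-v)) (((1-v)^2)⁻¹) v := by
      have := (hasDerivAt_id v).div ((hasDerivAt_id v).const_sub 1) hne
      simp only [id_eq] at this
      exact this.congr_deriv (by ring)
    exact h3.hasDerivWithinAt
  have hinj : Set.InjOn (fun v : ℝ => v / (1-v)) (Set.Ioo 0 1) := by
    intro a ha b hb h
    have hna : (1:ℝ) - a ≠ 0 := by intro hc; have := ha.2; linarith
    have hnb : (1:ℝ) - b ≠ 0 := by intro hc; have := hb.2; linarith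
    field_simp at h
    nlinarith [h]
  rw [J, ← himg, MeasureTheory.integral_image_eq_integral_abs_deriv_smul
    measurableSet_Ioo hderiv hinj g0]
  apply MeasureTheory.setIntegral_congr_fun measurableSet_Ioo
  intro v hv
  have hv0 : (0:ℝ) < v := hv.1
  have hw0 : (0:ℝ) < 1 - v := by have := hv.2; linarith
  have h1 : (1:ℝ) + v/(1-v) = (1-v)⁻¹ := by field_simp; ring
  have e0 : (((1-v):ℝ)^2)⁻¹ = (1-v) ^ (-(2:ℝ)) := by
    rw [← Real.rpow_two, ← Real.rpow_neg hw0.le]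
  have e1 : g0 (v/(1-v)) = v ^ ((1:ℝ)/6) * (1-v) ^ (-((1:ℝ)/6)) * (1-v) ^ ((3:ℝ)/2) := by
    unfold g0
    rw [h1, Real.div_rpow hv0.le hw0.le, Real.inv_rpow hw0.le, ← Real.rpow_neg hw0.le,
      div_eq_mul_inv, ← Real.rpow_neg hw0.le]
    norm_num
  show |(((1-v):ℝ)^2)⁻¹| • g0 (v/(1-v)) = v ^ ((1:ℝ)/6) * (1-v) ^ (-(2:ℝ)/3)
  rw [smul_eq_mul, abs_of_nonneg (by positivity), e0, e1,
    show (1-v) ^ (-(2:ℝ)) * (v ^ ((1:ℝ)/6) * (1-v) ^ (-((1:ℝ)/6)) * (1-v) ^ ((3:ℝ)/2))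
      = v ^ ((1:ℝ)/6) * ((1-v) ^ (-(2:ℝ)) * (1-v) ^ (-((1:ℝ)/6)) * (1-v) ^ ((3:ℝ)/2)) from by
        ring, ← Real.rpow_add hw0, ← Real.rpow_add hw0]
  norm_num

lemma beta_val : (∫ v in Set.Ioo (0:ℝ) 1, v ^ ((1:ℝ)/6) * (1-v) ^ (-(2:ℝ)/3))
    = Real.Gamma (7/6) * Real.Gamma (1/3) / Real.Gamma (3/2) := by
  have hb := Complex.Gamma_mul_Gamma_eq_betaIntegral
    (s := ((7/6:ℝ) : ℂ)) (t := ((1/3:ℝ) : ℂ))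
    (by simp [Complex.ofReal_re]) (by simp [Complex.ofReal_re])
  have hkey : Complex.betaIntegral ((7/6:ℝ) : ℂ) ((1/3:ℝ) : ℂ)
      = ((∫ v in (0:ℝ)..1, v ^ ((1:ℝ)/6) * (1-v) ^ (-(2:ℝ)/3) : ℝ) : ℂ) := by
    rw [Complex.betaIntegral, ← intervalIntegral.integral_ofReal]
    apply intervalIntegral.integral_congr
    intro x hx
    rw [Set.uIcc_of_le zero_le_one] at hx
    have hx0 : (0:ℝ) ≤ x := hx.1
    have hx1 : (0:ℝ) ≤ 1 - x := by have := hx.2; linarith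
    show (x:ℂ) ^ (((7/6:ℝ):ℂ) - 1) * ((1:ℂ) - (x:ℂ)) ^ (((1/3:ℝ):ℂ) - 1)
        = ((x ^ ((1:ℝ)/6) * (1-x) ^ (-(2:ℝ)/3) : ℝ) : ℂ)
    rw [show (((7/6:ℝ):ℂ)) - 1 = (((1:ℝ)/6 : ℝ):ℂ) by push_cast; norm_num,
      show (((1/3:ℝ):ℂ)) - 1 = ((-(2:ℝ)/3 : ℝ):ℂ) by push_cast; norm_num,
      show ((1:ℂ) - (x:ℂ)) = ((1-x : ℝ):ℂ) by push_cast; ring,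
      ← Complex.ofReal_cpow hx0, ← Complex.ofReal_cpow hx1, ← Complex.ofReal_mul]
  rw [hkey] at hb
  have hsum : ((7/6:ℝ) : ℂ) + ((1/3:ℝ) : ℂ) = ((3/2:ℝ) : ℂ) := by push_cast; norm_num
  rw [hsum, Complex.Gamma_ofReal, Complex.Gamma_ofReal, Complex.Gamma_ofReal,
    ← Complex.ofReal_mul, ← Complex.ofReal_mul] at hb
  have hreal := Complex.ofReal_injective hb
  have hIoo : (∫ v in (0:ℝ)..1, v ^ ((1:ℝ)/6) * (1-v) ^ (-(2:ℝ)/3))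
      = ∫ v in Set.Ioo (0:ℝ) 1, v ^ ((1:ℝ)/6) * (1-v) ^ (-(2:ℝ)/3) := by
    rw [intervalIntegral.integral_of_le zero_le_one, MeasureTheory.integral_Ioc_eq_integral_Ioo]
  rw [hIoo] at hreal
  have hΓ : (0:ℝ) < Real.Gamma (3/2) := Real.Gamma_pos_of_pos (by norm_num)
  rw [eq_div_iff hΓ.ne', hreal]
  ring

lemma J_eq : J = Real.Gamma (7/6) * Real.Gamma (1/3) / Real.Gamma (3/2) := by
  rw [J_as_beta, beta_val]

lemma sq_tendsto : Tendsto (fun s : ℝ => s^2) atTop atTop :=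
  tendsto_pow_atTop (two_ne_zero)

lemma tendsto_Phi : Tendsto Phi atTop (nhds J) := by
  have key : Tendsto (fun s => ∫ u in Set.Ioi (0:ℝ),
      (Set.Ioc (0:ℝ) (s^2)).indicator (hfun s) u) atTop (nhds J) := by
    apply MeasureTheory.tendsto_integral_filter_of_dominated_convergence g0
    · exact Eventually.of_forall fun s =>
        (((hfun_meas s).indicator measurableSet_Ioc).aestronglyMeasurable).restrict
    · apply Eventually.of_forall
      intro s
      filter_upwards [ae_restrict_mem measurableSet_Ioi] with u hu
      by_cases hmem : u ∈ Set.Ioc (0:ℝ) (s^2)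
      · rw [Set.indicator_of_mem hmem]
        have hu0 : (0:ℝ) < u := hmem.1
        have hs2 : (0:ℝ) < s^2 := lt_of_lt_of_le hu0 hmem.2
        have h0 : (0:ℝ) ≤ 1 - u/s^2 := by
          rw [sub_nonneg]
          exact (div_le_one hs2).mpr hmem.2
        have h1 : 1 - u/s^2 ≤ 1 := by
          have : 0 ≤ u / s^2 := by positivity
          linarith
        rw [Real.norm_eq_abs, abs_of_nonneg (by unfold hfun; positivity)]
        have : hfun s u ≤ u ^ ((1:ℝ)/6) * 1 * (1+u) ^ (-(3:ℝ)/2) := by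
          unfold hfun
          apply mul_le_mul_of_nonneg_right _ (Real.rpow_nonneg (by linarith) _)
          exact mul_le_mul_of_nonneg_left (Real.rpow_le_one h0 h1 (by norm_num))
            (Real.rpow_nonneg hu0.le _)
        simpa [g0, mul_one] using this
      · rw [Set.indicator_of_notMem hmem, norm_zero]
        have hu0 : (0:ℝ) < u := hu
        unfold g0; positivity
    · exact g0_integrable
    · filter_upwards [ae_restrict_mem measurableSet_Ioi] with u hu
      have hu0 : (0:ℝ) < u := hu
      have hev : ∀ᶠ s : ℝ in atTop, (Set.Ioc (0:ℝ) (s^2)).indicator (hfun s) u = hfun s u := by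
        filter_upwards [sq_tendsto.eventually_ge_atTop u] with s hs
        exact Set.indicator_of_mem (Set.mem_Ioc.mpr ⟨hu0, hs⟩) _
      rw [tendsto_congr' hev]
      have hmid : Tendsto (fun s : ℝ => (1 - u/s^2) ^ ((1:ℝ)/3)) atTop (nhds 1) := by
        have h1 : Tendsto (fun s : ℝ => 1 - u/s^2) atTop (nhds 1) := by
          have := (tendsto_const_nhds (x := u) (f := atTop (α := ℝ))).div_atTop sq_tendsto
          simpa using tendsto_const_nhds.sub this
        have := h1.rpow_const (p := (1:ℝ)/3) (Or.inr (by norm_num))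
        simpa [Real.one_rpow] using this
      have := (hmid.const_mul (u ^ ((1:ℝ)/6))).mul_const ((1+u) ^ (-(3:ℝ)/2))
      simpa [g0, hfun, mul_one] using this
  refine key.congr fun s => ?_
  rw [MeasureTheory.integral_indicator measurableSet_Ioc,
    MeasureTheory.Measure.restrict_restrict measurableSet_Ioc,
    Set.inter_eq_left.mpr Set.Ioc_subset_Ioi_self]
  rfl

lemma tendsto_cosh_atTop : Tendsto Real.cosh atTop atTop := by
  apply tendsto_atTop_mono (fun x => ?_)
    (Real.tendsto_exp_atTop.atTop_div_const (by norm_num : (0:ℝ) < 2))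
  rw [Real.cosh_eq]
  have := Real.exp_pos (-x)
  linarith

lemma tendsto_sinh_atTop : Tendsto Real.sinh atTop atTop := by
  apply tendsto_atTop_mono' atTop (show ∀ᶠ x : ℝ in atTop,
      (Real.exp x - 1)/2 ≤ Real.sinh x by
    filter_upwards [eventually_ge_atTop (0:ℝ)] with x hx
    rw [Real.sinh_eq]
    have h1 : Real.exp (-x) ≤ 1 := Real.exp_le_one_iff.mpr (by linarith)
    linarith)
  have h2 : Tendsto (fun x : ℝ => Real.exp x - 1) atTop atTop := by
    simpa [sub_eq_add_neg] using tendsto_atTop_add_const_right atTop (-1) Real.tendsto_exp_atTop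
  exact h2.atTop_div_const (by norm_num)

lemma tendsto_tanh : Tendsto (fun x => Real.sinh x / Real.cosh x) atTop (nhds 1) := by
  have hpt : ∀ x : ℝ, Real.sinh x / Real.cosh x = 1 - 2 / (Real.exp (2*x) + 1) := by
    intro x
    have h3 : Real.exp (2*x) = Real.exp x * Real.exp x := by
      rw [← Real.exp_add]; ring_nf
    have h1 := Real.exp_pos x
    have h2 := Real.exp_pos (2*x)
    have hc := Real.cosh_pos x
    rw [Real.sinh_eq, Real.cosh_eq, Real.exp_neg, h3]
    field_simp
    ring
  have hinner : Tendsto (fun x : ℝ => 2 / (Real.exp (2*x) + 1)) atTop (nhds 0) := by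
    apply Tendsto.div_atTop tendsto_const_nhds
    apply tendsto_atTop_add_const_right
    exact Real.tendsto_exp_atTop.comp (tendsto_id.const_mul_atTop (by norm_num : (0:ℝ) < 2))
  have := tendsto_const_nhds (x := (1:ℝ)) (f := atTop (α := ℝ)) |>.sub hinner
  rw [sub_zero] at this
  exact this.congr fun x => (hpt x).symm

/-- the Gamma-quotient prefactor of the hypergeometric function -/
noncomputable def Cc : ℝ := Real.Gamma (5/2) / (Real.Gamma (7/6) * Real.Gamma (4/3))

lemma CJ : Cc * J = 9/2 := by
  have h52 : Real.Gamma (5/2) = (3/2) * Real.Gamma (3/2) := by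
    rw [show (5/2 : ℝ) = 3/2 + 1 by norm_num, Real.Gamma_add_one (by norm_num)]
  have h43 : Real.Gamma (4/3) = (1/3) * Real.Gamma (1/3) := by
    rw [show (4/3 : ℝ) = 1/3 + 1 by norm_num, Real.Gamma_add_one (by norm_num)]
  have p32 : (0:ℝ) < Real.Gamma (3/2) := Real.Gamma_pos_of_pos (by norm_num)
  have p76 : (0:ℝ) < Real.Gamma (7/6) := Real.Gamma_pos_of_pos (by norm_num)
  have p13 : (0:ℝ) < Real.Gamma (1/3) := Real.Gamma_pos_of_pos (by norm_num)
  rw [Cc, J_eq, h52, h43]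
  field_simp
  ring

lemma second_eq {ρ : ℝ} (hρ : 0 < ρ) :
    Real.sinh ρ ^ 3 / Real.cosh ρ ^ ((2:ℝ)/3)
      * hyp2F1 (3/2) (7/6) (5/2) (-(Real.sinh ρ ^ 2))
    = (Real.sinh ρ / Real.cosh ρ) ^ ((2:ℝ)/3) * (Cc * Phi (Real.sinh ρ)) := by
  set s := Real.sinh ρ with hs_def
  have hs : 0 < s := Real.sinh_pos_iff.mpr hρ
  have hc : 0 < Real.cosh ρ := Real.cosh_pos ρ
  have hs2 : (0:ℝ) < s^2 := by positivity
  -- the integral in the definition of hyp2F1 equals (s^2)^(-7/6) * Phi s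
  have hint : (∫ t in (0:ℝ)..1, t ^ ((7:ℝ)/6 - 1) * (1 - t) ^ ((5:ℝ)/2 - 7/6 - 1)
        * (1 - -(s^2) * t) ^ (-(3/2:ℝ)))
      = (s^2 : ℝ) ^ (-(7:ℝ)/6) * Phi s := by
    have key : ∀ t ∈ Set.uIcc (0:ℝ) 1,
        t ^ ((7:ℝ)/6 - 1) * (1 - t) ^ ((5:ℝ)/2 - 7/6 - 1) * (1 - -(s^2) * t) ^ (-(3/2:ℝ))
        = (s^2 : ℝ) ^ (-(1:ℝ)/6) * hfun s (s^2 * t) := by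
      intro t ht
      rw [Set.uIcc_of_le zero_le_one] at ht
      have ht0 : (0:ℝ) ≤ t := ht.1
      unfold hfun
      rw [show s^2 * t / s^2 = t by field_simp,
        Real.mul_rpow (le_of_lt hs2) ht0,
        show (1:ℝ) - -(s^2) * t = 1 + s^2 * t by ring]
      rw [show (s^2:ℝ) ^ (-(1:ℝ)/6) * ((s^2:ℝ) ^ ((1:ℝ)/6) * t ^ ((1:ℝ)/6)
            * (1 - t) ^ ((1:ℝ)/3) * (1 + s^2*t) ^ (-(3:ℝ)/2))
          = ((s^2:ℝ) ^ (-(1:ℝ)/6) * (s^2:ℝ) ^ ((1:ℝ)/6)) * (t ^ ((1:ℝ)/6)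
            * (1 - t) ^ ((1:ℝ)/3) * (1 + s^2*t) ^ (-(3:ℝ)/2)) from by ring,
        ← Real.rpow_add hs2]
      norm_num
    rw [intervalIntegral.integral_congr key, intervalIntegral.integral_const_mul,
      intervalIntegral.integral_comp_mul_left (hfun s) (ne_of_gt hs2)]
    rw [mul_zero, mul_one, smul_eq_mul,
      intervalIntegral.integral_of_le (le_of_lt hs2)]
    rw [show (∫ u in Set.Ioc (0:ℝ) (s^2), hfun s u) = Phi s from rfl,
      ← mul_assoc, show (s^2:ℝ)⁻¹ = (s^2:ℝ) ^ (-(1:ℝ)) from by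
        rw [← Real.rpow_neg_one], ← Real.rpow_add hs2]
    norm_num
  have hexps : s ^ 3 * (s^2 : ℝ) ^ (-(7:ℝ)/6) = s ^ ((2:ℝ)/3) := by
    rw [← Real.rpow_natCast s 3, ← Real.rpow_natCast s 2, ← Real.rpow_mul hs.le,
      ← Real.rpow_add hs]
    norm_num
  rw [hyp2F1]
  rw [show (5/2 : ℝ) - 7/6 = 4/3 by norm_num]
  rw [show (∫ t in (0:ℝ)..1, t ^ ((7:ℝ)/6 - 1) * (1-t) ^ ((4:ℝ)/3 - 1)
      * (1 - -(s^2) * t) ^ (-(3/2:ℝ)))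
    = (∫ t in (0:ℝ)..1, t ^ ((7:ℝ)/6 - 1) * (1-t) ^ ((5:ℝ)/2 - 7/6 - 1)
      * (1 - -(s^2) * t) ^ (-(3/2:ℝ))) from by norm_num]
  rw [hint]
  rw [show Real.Gamma (5/2) / (Real.Gamma (7/6) * Real.Gamma (4/3)) = Cc from rfl]
  rw [Real.div_rpow hs.le hc.le, ← hexps]
  have hcp : (0:ℝ) < Real.cosh ρ ^ ((2:ℝ)/3) := Real.rpow_pos_of_pos hc _
  field_simp

end GubserAux

/-- The Navier–Stokes Gubser temperature profile
`T̂_NS(ρ) = T₀ cosh^{-2/3}ρ + (4η̄/27) sinh³ρ cosh^{-2/3}ρ ₂F₁(3/2,7/6;5/2;-sinh²ρ)`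
tends to `±2η̄/3` as `ρ → ±∞`; in particular for any `η̄ > 0` and any `T₀`
there is a `ρ` where the temperature is negative. -/
theorem stmt12_gubser_NS_negative_temperature
    (T0 ηb : ℝ) (hη : 0 < ηb) :
    let TNS : ℝ → ℝ := fun ρ =>
      T0 / Real.cosh ρ ^ ((2 : ℝ) / 3)
        + 4 * ηb / 27 * (Real.sinh ρ ^ 3 / Real.cosh ρ ^ ((2 : ℝ) / 3))
            * hyp2F1 (3 / 2) (7 / 6) (5 / 2) (-(Real.sinh ρ ^ 2))
    Tendsto TNS atTop (nhds (2 * ηb / 3)) ∧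
    Tendsto TNS atBot (nhds (-(2 * ηb / 3))) ∧
    ∃ ρ : ℝ, TNS ρ < 0 := by
  intro TNS
  have l1 : Tendsto (fun ρ => T0 / Real.cosh ρ ^ ((2:ℝ)/3)) atTop (nhds 0) :=
    Tendsto.div_atTop tendsto_const_nhds
      ((tendsto_rpow_atTop (by norm_num : (0:ℝ) < 2/3)).comp GubserAux.tendsto_cosh_atTop)
  have l2 : Tendsto (fun ρ => (Real.sinh ρ / Real.cosh ρ) ^ ((2:ℝ)/3)) atTop (nhds 1) := by
    have := GubserAux.tendsto_tanh.rpow_const (p := (2:ℝ)/3) (Or.inr (by norm_num))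
    simpa [Real.one_rpow] using this
  have l3 : Tendsto (fun ρ => GubserAux.Cc * GubserAux.Phi (Real.sinh ρ)) atTop
      (nhds (GubserAux.Cc * GubserAux.J)) :=
    (GubserAux.tendsto_Phi.comp GubserAux.tendsto_sinh_atTop).const_mul _
  have hmain : Tendsto (fun ρ => T0 / Real.cosh ρ ^ ((2:ℝ)/3)
      + 4 * ηb / 27 * ((Real.sinh ρ / Real.cosh ρ) ^ ((2:ℝ)/3)
        * (GubserAux.Cc * GubserAux.Phi (Real.sinh ρ)))) atTop
      (nhds (0 + 4 * ηb / 27 * (1 * (GubserAux.Cc * GubserAux.J)))) :=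
    l1.add ((l2.mul l3).const_mul _)
  rw [show (0:ℝ) + 4 * ηb / 27 * (1 * (GubserAux.Cc * GubserAux.J)) = 2 * ηb / 3 by
    rw [GubserAux.CJ]; ring] at hmain
  have hTop : Tendsto TNS atTop (nhds (2 * ηb / 3)) := by
    apply hmain.congr'
    filter_upwards [eventually_gt_atTop (0:ℝ)] with ρ hρ
    show _ = TNS ρ
    simp only [TNS]
    rw [mul_assoc, GubserAux.second_eq hρ]
  have hNegId : ∀ ρ : ℝ, TNS (-ρ) = 2 * (T0 / Real.cosh ρ ^ ((2:ℝ)/3)) - TNS ρ := by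
    intro ρ
    simp only [TNS, Real.cosh_neg, Real.sinh_neg]
    ring_nf
  have hBotAux : Tendsto (fun ρ => TNS (-ρ)) atTop (nhds (-(2 * ηb / 3))) := by
    have := (l1.const_mul 2).sub hTop
    rw [show (2:ℝ) * 0 - 2 * ηb / 3 = -(2 * ηb / 3) by ring] at this
    exact this.congr fun ρ => (hNegId ρ).symm
  have hBot : Tendsto TNS atBot (nhds (-(2 * ηb / 3))) := by
    have := hBotAux.comp tendsto_neg_atBot_atTop
    exact this.congr fun x => by simp
  refine ⟨hTop, hBot, ?_⟩
  have hev : ∀ᶠ ρ : ℝ in atBot, TNS ρ < 0 :=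
    hBot.eventually_lt_const (by linarith : -(2 * ηb / 3) < 0)
  exact hev.exists
end
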